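/- Let α ∈ [0,1) and let s, n be integers with s ≥ 1 and n ≥ ⌊5s/3⌋ + 3, and let B_1 be the real 3×3 matrix B_1 = [[αn − αs + s − 1, (1−α)(n − ⌊5s/3⌋ − 1), (1−α)(⌊2s/3⌋+1)], [(1−α)s, n + αs − ⌊5s/3⌋ − 2, 0], [(1−α)s, 0, αs]]. Then B_1 has three real eigenvalues θ_1 ≥ θ_2 ≥ θ_3, and its second largest eigenvalue satisfies θ_2 ≤ n + αs − ⌊5s/3⌋ − 2. -/

import Mathlib

open SimpleGraph

/-- The `Aα`-matrix of a finite simple graph: `Aα(G) = α·D(G) + (1-α)·A(G)`. -/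
noncomputable def aAlphaMatrix {V : Type*} [Finite V] (α : ℝ) (G : SimpleGraph V) :
    Matrix V V ℝ :=
  letI := Fintype.ofFinite V
  letI := Classical.decEq V
  letI : DecidableRel G.Adj := Classical.decRel _
  α • Matrix.diagonal (fun v => (G.degree v : ℝ)) + (1 - α) • (G.adjMatrix ℝ)

/-- The `Aα`-spectral radius: the largest eigenvalue of `Aα(G)` (the supremum of its real
spectrum; all eigenvalues of this symmetric matrix are real). -/
noncomputable def lambdaAlpha {V : Type*} [Finite V] (α : ℝ) (G : SimpleGraph V) : ℝ :=
  letI := Fintype.ofFinite V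
  letI := Classical.decEq V
  sSup (spectrum ℝ (aAlphaMatrix α G))

/-- The join `G ∨ H` of two graphs on disjoint vertex sets. -/
def graphJoin {V W : Type*} (G : SimpleGraph V) (H : SimpleGraph W) : SimpleGraph (V ⊕ W) where
  Adj x y :=
    match x, y with
    | Sum.inl a, Sum.inl b => G.Adj a b
    | Sum.inr a, Sum.inr b => H.Adj a b
    | Sum.inl _, Sum.inr _ => True
    | Sum.inr _, Sum.inl _ => True
  symm := by
    refine ⟨?_⟩
    rintro (a | a) (b | b) h
    · exact G.adj_symm h
    · trivial
    · trivial
    · exact H.adj_symm h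
  loopless := by
    refine ⟨?_⟩
    rintro (a | a) h
    · exact G.irrefl h
    · exact H.irrefl h

/-- `G` has an `H`-factor where `H` consists of the paths `P_k` for `k ∈ ks`: a spanning
subgraph all of whose connected components are paths `P_k` with `k ∈ ks`. -/
def HasPathFactor {V : Type*} (G : SimpleGraph V) (ks : Set ℕ) : Prop :=
  ∃ F : SimpleGraph V, F ≤ G ∧
    ∀ c : F.ConnectedComponent, ∃ k ∈ ks, Nonempty ((F.induce c.supp) ≃g pathGraph k)

/-- `K_1 ∨ (K_{n-2} ∪ K_1)`. -/
def specialGraph (n : ℕ) : SimpleGraph (Fin 1 ⊕ (Fin (n - 2) ⊕ Fin 1)) :=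
  graphJoin (⊤ : SimpleGraph (Fin 1))
    ((⊤ : SimpleGraph (Fin (n - 2))) ⊕g (⊤ : SimpleGraph (Fin 1)))

/-- The graph `K_s ∨ (K_{n−⌊5s/3⌋−1} ∪ (⌊2s/3⌋+1)K_1)`. -/
def bigGraph (n s : ℕ) :
    SimpleGraph (Fin s ⊕ (Fin (n - 5 * s / 3 - 1) ⊕ Fin (2 * s / 3 + 1))) :=
  graphJoin (⊤ : SimpleGraph (Fin s))
    ((⊤ : SimpleGraph (Fin (n - 5 * s / 3 - 1))) ⊕g (⊥ : SimpleGraph (Fin (2 * s / 3 + 1))))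

/-- The quotient matrix `B₁` of the `A_α`-matrix of
`K_s ∨ (K_{n−⌊5s/3⌋−1} ∪ (⌊2s/3⌋+1)K_1)` with respect to the partition of the vertex set
into the three parts `V(K_s)`, `V(K_{n−⌊5s/3⌋−1})`, `V((⌊2s/3⌋+1)K_1)`. -/
noncomputable def quotB1 (α : ℝ) (s n : ℕ) : Matrix (Fin 3) (Fin 3) ℝ :=
  !![α * n - α * s + s - 1,
      (1 - α) * ((n : ℝ) - ((5 * s / 3 : ℕ) : ℝ) - 1),
      (1 - α) * (((2 * s / 3 : ℕ) : ℝ) + 1);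
    (1 - α) * s, (n : ℝ) + α * s - ((5 * s / 3 : ℕ) : ℝ) - 2, 0;
    (1 - α) * s, 0, α * s]

open Polynomial Matrix

section Aux

variable {N : Type*} [Fintype N] [DecidableEq N]

lemma my_charmatrix_eq (M : Matrix N N ℝ) :
    charmatrix M = (X : ℝ[X]) • (1 : Matrix N N ℝ[X]) - M.map C := by
  ext i j
  by_cases h : i = j
  · subst h; simp [charmatrix_apply, Matrix.one_apply]
  · simp [charmatrix_apply_ne _ _ _ h, Matrix.one_apply, h]

lemma my_charpoly_conj (U V D : Matrix N N ℝ) (h : U * V = 1) :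
    (U * D * V).charpoly = D.charpoly := by
  have hUV : (U.map (C : ℝ →+* ℝ[X])) * (V.map C) = 1 := by
    rw [← Matrix.map_mul, h, Matrix.map_one _ (map_zero C) (map_one C)]
  have key : charmatrix (U * D * V) = (U.map C) * charmatrix D * (V.map C) := by
    rw [my_charmatrix_eq, my_charmatrix_eq, Matrix.mul_sub, Matrix.sub_mul]
    congr 1
    · rw [mul_smul_comm, mul_one, smul_mul_assoc, hUV]
    · rw [← Matrix.map_mul, ← Matrix.map_mul]
  rw [Matrix.charpoly, Matrix.charpoly, key, det_mul, det_mul]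
  have : (U.map (C : ℝ →+* ℝ[X])).det * (V.map C).det = 1 := by
    rw [← det_mul, hUV, det_one]
  calc (U.map (C : ℝ →+* ℝ[X])).det * (charmatrix D).det * (V.map C).det
      = (charmatrix D).det * ((U.map C).det * (V.map C).det) := by ring
    _ = (charmatrix D).det := by rw [this, mul_one]

lemma my_charpoly_diagonal (v : N → ℝ) :
    (Matrix.diagonal v).charpoly = ∏ i, (X - C (v i)) := by
  have h : charmatrix (Matrix.diagonal v) = Matrix.diagonal fun i => (X : ℝ[X]) - C (v i) := by
    ext i j
    by_cases h : i = j
    · subst h; simp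
    · simp [charmatrix_apply_ne _ _ _ h, Matrix.diagonal_apply_ne _ h]
  rw [Matrix.charpoly, h, det_diagonal]

lemma my_hermitian_charpoly_eq {A : Matrix N N ℝ} (hA : A.IsHermitian) :
    A.charpoly = ∏ i, (X - C (hA.eigenvalues i)) := by
  have hspec := hA.spectral_theorem
  have hof : (RCLike.ofReal ∘ hA.eigenvalues : N → ℝ) = hA.eigenvalues := by
    funext i; simp
  have hU : (hA.eigenvectorUnitary : Matrix N N ℝ) * star (hA.eigenvectorUnitary : Matrix N N ℝ) = 1 :=
    (Matrix.mem_unitaryGroup_iff).mp hA.eigenvectorUnitary.2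
  calc A.charpoly
      = ((hA.eigenvectorUnitary : Matrix N N ℝ) * Matrix.diagonal hA.eigenvalues *
          star (hA.eigenvectorUnitary : Matrix N N ℝ)).charpoly := by
        conv_lhs => rw [hspec]
        rw [hof, Unitary.conjStarAlgAut_apply]
    _ = (Matrix.diagonal hA.eigenvalues).charpoly := my_charpoly_conj _ _ _ hU
    _ = ∏ i, (X - C (hA.eigenvalues i)) := my_charpoly_diagonal _

lemma my_charpoly_fin_three (M : Matrix (Fin 3) (Fin 3) ℝ) :
    M.charpoly =
      (X - C (M 0 0)) * (X - C (M 1 1)) * (X - C (M 2 2))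
        - C (M 1 2 * M 2 1) * (X - C (M 0 0))
        - C (M 0 1 * M 1 0) * (X - C (M 2 2))
        - C (M 0 2 * M 2 0) * (X - C (M 1 1))
        - C (M 0 1 * M 1 2 * M 2 0) - C (M 0 2 * M 1 0 * M 2 1) := by
  rw [Matrix.charpoly, Matrix.det_fin_three]
  simp only [charmatrix_apply_eq, charmatrix_apply_ne _ _ _ (by decide : (0 : Fin 3) ≠ 1),
    charmatrix_apply_ne _ _ _ (by decide : (0 : Fin 3) ≠ 2),
    charmatrix_apply_ne _ _ _ (by decide : (1 : Fin 3) ≠ 0),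
    charmatrix_apply_ne _ _ _ (by decide : (1 : Fin 3) ≠ 2),
    charmatrix_apply_ne _ _ _ (by decide : (2 : Fin 3) ≠ 0),
    charmatrix_apply_ne _ _ _ (by decide : (2 : Fin 3) ≠ 1), C_mul]
  ring

lemma my_sort3 (x y z : ℝ) :
    ∃ θ₁ θ₂ θ₃ : ℝ, θ₂ ≤ θ₁ ∧ θ₃ ≤ θ₂ ∧
      (X - C x) * (X - C y) * (X - C z) = (X - C θ₁) * (X - C θ₂) * (X - C θ₃) := by
  rcases le_total x y with h1 | h1 <;> rcases le_total y z with h2 | h2 <;>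
    rcases le_total x z with h3 | h3
  · exact ⟨z, y, x, by linarith, by linarith, by ring⟩
  · exact ⟨z, y, x, by linarith, by linarith, by ring⟩
  · exact ⟨y, z, x, by linarith, by linarith, by ring⟩
  · exact ⟨y, x, z, by linarith, by linarith, by ring⟩
  · exact ⟨z, x, y, by linarith, by linarith, by ring⟩
  · exact ⟨x, z, y, by linarith, by linarith, by ring⟩
  · exact ⟨x, z, y, by linarith, by linarith, by ring⟩
  · exact ⟨x, y, z, by linarith, by linarith, by ring⟩

end Aux

open Polynomial Matrix in
lemma my_main_aux (a b c d e f : ℝ) (hb : 0 < b) (hc : 0 < c) (hd : 0 < d) (hef : f < e) :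
    ∃ θ₁ θ₂ θ₃ : ℝ, θ₂ ≤ θ₁ ∧ θ₃ ≤ θ₂ ∧
      (!![a, b, c; d, e, 0; d, 0, f]).charpoly = (X - C θ₁) * (X - C θ₂) * (X - C θ₃) ∧
      θ₂ ≤ e := by
  have hbd : (0:ℝ) ≤ b * d := le_of_lt (mul_pos hb hd)
  have hcd : (0:ℝ) ≤ c * d := le_of_lt (mul_pos hc hd)
  set br := Real.sqrt (b * d) with hbr'
  set cr := Real.sqrt (c * d) with hcr'
  have hbr : br * br = b * d := Real.mul_self_sqrt hbd
  have hcr : cr * cr = c * d := Real.mul_self_sqrt hcd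
  have hS : (!![a, br, cr; br, e, 0; cr, 0, f]).IsHermitian := by
    ext i j
    fin_cases i <;> fin_cases j <;> simp [Matrix.conjTranspose_apply]
  have hBch := my_charpoly_fin_three (!![a, b, c; d, e, 0; d, 0, f])
  have hSch := my_charpoly_fin_three (!![a, br, cr; br, e, 0; cr, 0, f])
  simp only [Matrix.cons_val_zero, Matrix.cons_val_one, Matrix.head_cons, Matrix.cons_val_two,
    Matrix.tail_cons, Matrix.head_fin_const, Matrix.cons_val', Matrix.empty_val',
    Matrix.cons_val_fin_one, Matrix.of_apply, mul_zero, zero_mul, map_zero, sub_zero,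
    zero_sub, neg_zero] at hBch hSch
  have heq : (!![a, b, c; d, e, 0; d, 0, f]).charpoly
      = (!![a, br, cr; br, e, 0; cr, 0, f]).charpoly := by
    rw [hBch, hSch, ← hbr, ← hcr]
  have hfact := my_hermitian_charpoly_eq hS
  rw [Fin.prod_univ_three] at hfact
  obtain ⟨θ₁, θ₂, θ₃, h12, h23, hperm⟩ :=
    my_sort3 (hS.eigenvalues 0) (hS.eigenvalues 1) (hS.eigenvalues 2)
  have hfinal : (!![a, b, c; d, e, 0; d, 0, f]).charpoly
      = (X - C θ₁) * (X - C θ₂) * (X - C θ₃) := by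
    rw [heq, hfact, hperm]
  refine ⟨θ₁, θ₂, θ₃, h12, h23, hfinal, ?_⟩
  have hpoly : (X - C θ₁) * (X - C θ₂) * (X - C θ₃)
      = (X - C a) * (X - C e) * (X - C f) - C (b * d) * (X - C f) - C (c * d) * (X - C e) := by
    rw [← hfinal, hBch]
  have hEval : ∀ t : ℝ, (t - θ₁) * (t - θ₂) * (t - θ₃)
      = (t - a) * (t - e) * (t - f) - b * d * (t - f) - c * d * (t - e) := by
    intro t
    have h := congrArg (Polynomial.eval t) hpoly
    simp only [eval_mul, eval_sub, eval_X, eval_C] at h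
    linear_combination h
  have hEe : (e - θ₁) * (e - θ₂) * (e - θ₃) < 0 := by
    rw [hEval e]
    nlinarith [mul_pos (mul_pos hb hd) (sub_pos.mpr hef)]
  have hEf : 0 < (f - θ₁) * (f - θ₂) * (f - θ₃) := by
    rw [hEval f]
    nlinarith [mul_pos (mul_pos hc hd) (sub_pos.mpr hef)]
  by_contra hcon
  push_neg at hcon
  have h1 : e - θ₁ < 0 := by linarith
  have h2 : e - θ₂ < 0 := by linarith
  have h12' : 0 < (e - θ₁) * (e - θ₂) := mul_pos_of_neg_of_neg h1 h2
  have h3 : e - θ₃ < 0 := by nlinarith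
  have f1 : f - θ₁ < 0 := by linarith
  have f2 : f - θ₂ < 0 := by linarith
  have f3 : f - θ₃ < 0 := by linarith
  nlinarith [mul_pos_of_neg_of_neg f1 f2]


open Polynomial in
/-- For `α ∈ [0,1)` and integers `s ≥ 1`, `n ≥ ⌊5s/3⌋ + 3`, the quotient matrix `B₁` has
three real eigenvalues `θ₁ ≥ θ₂ ≥ θ₃` (its characteristic polynomial splits over `ℝ` with
these roots), and the second largest one satisfies `θ₂ ≤ n + αs − ⌊5s/3⌋ − 2`. -/
theorem quotB1_second_eigenvalue_le (α : ℝ) (hα0 : 0 ≤ α) (hα1 : α < 1)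
    (s n : ℕ) (hs : 1 ≤ s) (hn : 5 * s / 3 + 3 ≤ n) :
    ∃ θ₁ θ₂ θ₃ : ℝ, θ₂ ≤ θ₁ ∧ θ₃ ≤ θ₂ ∧
      (quotB1 α s n).charpoly = (X - C θ₁) * (X - C θ₂) * (X - C θ₃) ∧
      θ₂ ≤ (n : ℝ) + α * s - ((5 * s / 3 : ℕ) : ℝ) - 2 := by
  have h1α : (0:ℝ) < 1 - α := by linarith
  have hsR : (1 : ℝ) ≤ (s : ℕ) := by exact_mod_cast hs
  have hnmR : ((5 * s / 3 : ℕ) : ℝ) + 3 ≤ (n : ℝ) := by exact_mod_cast hn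
  have hkR : (0:ℝ) ≤ ((2 * s / 3 : ℕ) : ℝ) := Nat.cast_nonneg _
  have hb : 0 < (1 - α) * ((n : ℝ) - ((5 * s / 3 : ℕ) : ℝ) - 1) := by nlinarith
  have hc : 0 < (1 - α) * (((2 * s / 3 : ℕ) : ℝ) + 1) := by nlinarith
  have hd : 0 < (1 - α) * (s : ℝ) := by nlinarith
  have hef : α * s < (n : ℝ) + α * s - ((5 * s / 3 : ℕ) : ℝ) - 2 := by linarith
  have := my_main_aux (α * n - α * s + s - 1)
    ((1 - α) * ((n : ℝ) - ((5 * s / 3 : ℕ) : ℝ) - 1))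
    ((1 - α) * (((2 * s / 3 : ℕ) : ℝ) + 1))
    ((1 - α) * (s : ℝ))
    ((n : ℝ) + α * s - ((5 * s / 3 : ℕ) : ℝ) - 2)
    (α * s) hb hc hd hef
  exact this
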